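/- Let P be a finite poset, k a field, and Q a full subposet of P with inclusion ι : Q ↪ P. Let M be a persistence module over Q with End(M) ≅ k (a brick), and let X be a persistence module over P with Res(X) ≅ M. Then: (a) X is a quotient of Lan(M) (i.e. there is an epimorphism Lan(M) → X) if and only if for every proper subobject Y of X one has Res(Y) ≇ M; and dually (b) X is a subobject of Ran(M) (i.e. there is a monomorphism X → Ran(M)) if and only if for every proper quotient Z of X one has Res(Z) ≇ M. -/

import Mathlib

open CategoryTheory CategoryTheory.Limits

attribute [local instance] CategoryTheory.Limits.HasFiniteBiproducts.of_hasFiniteProducts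

section Posets

variable {P : Type} [PartialOrder P]

/-- Zigzag connectivity of two elements of a subset `S` of a poset: they are linked by a
zigzag of comparable pairs inside `S`. -/
def ZigzagConnIn (S : Set P) (a b : S) : Prop :=
  Relation.ReflTransGen (fun u v : S => (u : P) ≤ v ∨ (v : P) ≤ u) a b

/-- A subset of a poset is convex if `x ≤ z ≤ y` with `x, y` in the subset implies `z` is. -/
def IsConvex (S : Set P) : Prop :=
  ∀ ⦃x y z : P⦄, x ∈ S → y ∈ S → x ≤ z → z ≤ y → z ∈ S

/-- An interval of a poset: a nonempty, convex, zigzag-connected subset. -/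
def IsIntervalSet (S : Set P) : Prop :=
  S.Nonempty ∧ IsConvex S ∧ ∀ a b : S, ZigzagConnIn S a b

end Posets

section IntervalModules

variable (k : Type) [Field k] {P : Type} [PartialOrder P]

open Classical in
/-- The linear map between the fibers of the interval module. -/
noncomputable def intervalModuleAux (S : Set P) (p q : P) :
    ↥(if p ∈ S then (⊤ : Submodule k k) else ⊥) →ₗ[k]
      ↥(if q ∈ S then (⊤ : Submodule k k) else ⊥) where
  toFun x := ⟨(if p ∈ S ∧ q ∈ S then (1 : k) else 0) * x.1, by
    by_cases hq : q ∈ S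
    · rw [if_pos hq]; exact Submodule.mem_top
    · rw [if_neg hq, if_neg (fun h => hq h.2), zero_mul]; exact Submodule.zero_mem _⟩
  map_add' x y := by ext; simp [mul_add]
  map_smul' c x := by ext; simp

open Classical in
/-- The interval module `k_S` associated to a convex subset `S` of a poset `P`:
it is `k` at points of `S`, `0` elsewhere, with identity structure maps inside `S`. -/
noncomputable def intervalModule (S : Set P) (hS : IsConvex S) : P ⥤ ModuleCat.{0} k where
  obj p := ModuleCat.of k ↥(if p ∈ S then (⊤ : Submodule k k) else ⊥)
  map {p q} _ := ModuleCat.ofHom (intervalModuleAux k S p q)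
  map_id p := by
    apply ModuleCat.hom_ext
    apply LinearMap.ext
    rintro ⟨x, hx⟩
    apply Subtype.ext
    show (if p ∈ S ∧ p ∈ S then (1 : k) else 0) * x = x
    by_cases hp : p ∈ S
    · simp [hp]
    · rw [if_neg hp] at hx
      simp [hp, (Submodule.mem_bot k).mp hx]
  map_comp {p q r} f g := by
    apply ModuleCat.hom_ext
    apply LinearMap.ext
    rintro ⟨x, hx⟩
    apply Subtype.ext
    show (if p ∈ S ∧ r ∈ S then (1 : k) else 0) * x
      = (if q ∈ S ∧ r ∈ S then (1 : k) else 0) * ((if p ∈ S ∧ q ∈ S then (1 : k) else 0) * x)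
    by_cases hp : p ∈ S
    · by_cases hr : r ∈ S
      · have hq : q ∈ S := hS hp hr (leOfHom f) (leOfHom g)
        simp [hp, hq, hr]
      · simp [hr]
    · rw [if_neg hp] at hx
      simp [(Submodule.mem_bot k).mp hx]

/-- A persistence module is an interval module if it is isomorphic to `k_S` for some
interval `S`. -/
def IsIntervalModule (M : P ⥤ ModuleCat.{0} k) : Prop :=
  ∃ (S : Set P) (hS : IsIntervalSet S), Nonempty (M ≅ intervalModule k S hS.2.1)

/-- A persistence module is interval-decomposable if it is isomorphic to a finite direct sum
of interval modules. -/
def IsIntervalDecomposable (M : P ⥤ ModuleCat.{0} k) : Prop :=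
  ∃ (n : ℕ) (J : Fin n → (P ⥤ ModuleCat.{0} k)),
    (∀ i, IsIntervalModule k (J i)) ∧ Nonempty (M ≅ ⨁ J)

/-- The support of a persistence module. -/
def moduleSupport (M : P ⥤ ModuleCat.{0} k) : Set P := {p : P | ¬ IsZero (M.obj p)}

/-- A persistence module valued in finite-dimensional vector spaces. -/
def PointwiseFinite (M : P ⥤ ModuleCat.{0} k) : Prop :=
  ∀ p : P, FiniteDimensional k (M.obj p)

end IntervalModules

section Approximations

variable {C : Type*} [Category C]

/-- `f : X ⟶ M` is a right `𝒳`-approximation of `M` if `X ∈ 𝒳` and every morphism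
from an object of `𝒳` to `M` factors through `f`. -/
def IsRightApproximation (𝒳 : C → Prop) {X M : C} (f : X ⟶ M) : Prop :=
  𝒳 X ∧ ∀ ⦃Y : C⦄ (g : Y ⟶ M), 𝒳 Y → ∃ h : Y ⟶ X, h ≫ f = g

/-- `f : X ⟶ M` is right minimal if every endomorphism `g` of `X` with `f ∘ g = f`
is an isomorphism. -/
def IsRightMinimal {X M : C} (f : X ⟶ M) : Prop :=
  ∀ g : X ⟶ X, g ≫ f = f → IsIso g

end Approximations

/-- An interval cover: a right minimal approximation by interval-decomposable modules. -/
def IsIntervalCover (k : Type) [Field k] {P : Type} [PartialOrder P]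
    {X M : P ⥤ ModuleCat.{0} k} (f : X ⟶ M) : Prop :=
  IsRightApproximation (IsIntervalDecomposable k) f ∧ IsRightMinimal f

section Resolutions

variable {C : Type*} [Category C] [Limits.HasZeroMorphisms C]

/-- `M` admits a resolution `0 ⟶ J_n ⟶ ⋯ ⟶ J_1 ⟶ J_0 ⟶ M ⟶ 0` of length `n` by objects
of `𝒳`: an exact sequence in which every `J_i` lies in `𝒳`.  (The data is encoded by an
`ℕ`-indexed complex which vanishes in degrees `> n` and is exact everywhere.) -/
def HasResolutionOfLength (𝒳 : C → Prop) (n : ℕ) (M : C) : Prop :=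
  ∃ (J : ℕ → C) (d : ∀ i, J (i + 1) ⟶ J i) (f : J 0 ⟶ M) (w0 : d 0 ≫ f = 0)
    (w : ∀ i, d (i + 1) ≫ d i = 0),
    (∀ i, i ≤ n → 𝒳 (J i)) ∧ (∀ i, n < i → IsZero (J i)) ∧
    Epi f ∧ (ShortComplex.mk (d 0) f w0).Exact ∧
    ∀ i, (ShortComplex.mk (d (i + 1)) (d i) (w i)).Exact

end Resolutions

section KanTheta

variable (k : Type) [Field k] {P : Type} [PartialOrder P] (Q : Set P)

/-- The restriction functor along the inclusion `ι : Q ↪ P` of a full subposet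
(precomposition with `ι`). -/
noncomputable def resFunctor : (P ⥤ ModuleCat.{0} k) ⥤ (↥Q ⥤ ModuleCat.{0} k) :=
  (CategoryTheory.Functor.whiskeringLeft _ _ _).obj (Subtype.mono_coe (· ∈ Q)).functor

variable (L R : (↥Q ⥤ ModuleCat.{0} k) ⥤ (P ⥤ ModuleCat.{0} k))
variable (adjL : L ⊣ resFunctor k Q) (adjR : resFunctor k Q ⊣ R)

/-- The canonical morphism `θ_M : Lan(M) ⟶ Ran(M)` corresponding to the identity of `M`
under the adjunction isomorphisms
`Hom(Lan M, Ran M) ≅ Hom(M, Res (Ran M)) ≅ Hom(M, M)`. -/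
noncomputable def thetaHom [IsIso adjR.counit] (M : ↥Q ⥤ ModuleCat.{0} k) :
    L.obj M ⟶ R.obj M :=
  (adjL.homEquiv M (R.obj M)).symm ((asIso adjR.counit).inv.app M)

lemma thetaHom_naturality [IsIso adjR.counit] {M N : ↥Q ⥤ ModuleCat.{0} k} (f : M ⟶ N) :
    L.map f ≫ thetaHom k Q L R adjL adjR N = thetaHom k Q L R adjL adjR M ≫ R.map f := by
  dsimp [thetaHom]
  rw [← Adjunction.homEquiv_naturality_left_symm, ← Adjunction.homEquiv_naturality_right_symm]
  congr 1
  simpa using ((asIso adjR.counit).inv.naturality f)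

/-- The functor `Θ`, sending `M` to the image of `θ_M : Lan(M) ⟶ Ran(M)`. -/
noncomputable def Theta [IsIso adjR.counit] :
    (↥Q ⥤ ModuleCat.{0} k) ⥤ (P ⥤ ModuleCat.{0} k) where
  obj M := image (thetaHom k Q L R adjL adjR M)
  map {M N} f := image.map (Arrow.homMk' _ _ (thetaHom_naturality k Q L R adjL adjR f))
  map_id M := by
    have h : Arrow.homMk' _ _ (thetaHom_naturality k Q L R adjL adjR (𝟙 M)) =
        𝟙 (Arrow.mk (thetaHom k Q L R adjL adjR M)) :=
      Arrow.hom_ext _ _ (by simp) (by simp)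
    show image.map (Arrow.homMk' _ _ (thetaHom_naturality k Q L R adjL adjR (𝟙 M))) =
      𝟙 (image (thetaHom k Q L R adjL adjR M))
    rw [h, image.map_id]
    rfl
  map_comp {M N O} f g := by
    have h : Arrow.homMk' _ _ (thetaHom_naturality k Q L R adjL adjR (f ≫ g)) =
        Arrow.homMk' _ _ (thetaHom_naturality k Q L R adjL adjR f) ≫
          Arrow.homMk' _ _ (thetaHom_naturality k Q L R adjL adjR g) :=
      Arrow.hom_ext _ _ (by simp) (by simp)
    show image.map (Arrow.homMk' _ _ (thetaHom_naturality k Q L R adjL adjR (f ≫ g))) =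
      image.map (Arrow.homMk' _ _ (thetaHom_naturality k Q L R adjL adjR f)) ≫
        image.map (Arrow.homMk' _ _ (thetaHom_naturality k Q L R adjL adjR g))
    rw [h, image.map_comp]

end KanTheta


section MainHelpers

variable {k : Type} [Field k] {P : Type} [PartialOrder P] {Q : Set P}

lemma res_map_mono {A B : P ⥤ ModuleCat.{0} k} (f : A ⟶ B) [Mono f] :
    Mono ((resFunctor k Q).map f) := by
  haveI : ∀ q : ↥Q, Mono (((resFunctor k Q).map f).app q) := fun q => by
    show Mono (f.app ((Subtype.mono_coe (· ∈ Q)).functor.obj q)); infer_instance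
  exact NatTrans.mono_of_mono_app _

lemma res_map_epi {A B : P ⥤ ModuleCat.{0} k} (f : A ⟶ B) [Epi f] :
    Epi ((resFunctor k Q).map f) := by
  haveI : ∀ q : ↥Q, Epi (((resFunctor k Q).map f).app q) := fun q => by
    show Epi (f.app ((Subtype.mono_coe (· ∈ Q)).functor.obj q)); infer_instance
  exact NatTrans.epi_of_epi_app _

lemma brick_mono_ne_zero {M : ↥Q ⥤ ModuleCat.{0} k} (ρ : CategoryTheory.End M ≃+* k)
    (β : M ⟶ M) [Mono β] : β ≠ 0 := by
  intro h0
  have h : (𝟙 M : M ⟶ M) = 0 := by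
    rw [← cancel_mono β]
    simp [h0]
  have h1 : (1 : CategoryTheory.End M) = 0 := h
  have h2 := congrArg ρ h1
  rw [map_one, map_zero] at h2
  exact one_ne_zero h2

lemma brick_epi_ne_zero {M : ↥Q ⥤ ModuleCat.{0} k} (ρ : CategoryTheory.End M ≃+* k)
    (β : M ⟶ M) [Epi β] : β ≠ 0 := by
  intro h0
  have h : (𝟙 M : M ⟶ M) = 0 := by
    rw [← cancel_epi β]
    simp [h0]
  have h1 : (1 : CategoryTheory.End M) = 0 := h
  have h2 := congrArg ρ h1
  rw [map_one, map_zero] at h2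
  exact one_ne_zero h2

lemma brick_inv {M : ↥Q ⥤ ModuleCat.{0} k} (ρ : CategoryTheory.End M ≃+* k)
    (β : CategoryTheory.End M) (hβ : β ≠ 0) :
    ∃ u : CategoryTheory.End M, β ≫ u = 𝟙 M ∧ u ≫ β = 𝟙 M := by
  have hc : ρ β ≠ 0 := by
    intro h
    exact hβ (ρ.injective (by rw [h, map_zero]))
  refine ⟨ρ.symm (ρ β)⁻¹, ?_, ?_⟩
  · have h1 : ρ.symm (ρ β)⁻¹ * β = 1 := by
      apply ρ.injective
      rw [map_mul, map_one, RingEquiv.apply_symm_apply, inv_mul_cancel₀ hc]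
    exact h1
  · have h1 : β * ρ.symm (ρ β)⁻¹ = 1 := by
      apply ρ.injective
      rw [map_mul, map_one, RingEquiv.apply_symm_apply, mul_inv_cancel₀ hc]
    exact h1

end MainHelpers

/-- Let `M` be a brick over the full subposet `Q` of `P` and let `X` be a
persistence module over `P` with `Res(X) ≅ M`.  Then `X` is a quotient of `Lan(M)` iff no
proper subobject of `X` restricts to `M`, and dually `X` is a subobject of `Ran(M)` iff no
proper quotient of `X` restricts to `M`. -/
theorem quotient_lan_subobject_ran_characterization
    (k : Type) [Field k] (P : Type) [PartialOrder P] [Finite P] (Q : Set P)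
    (L R : (↥Q ⥤ ModuleCat.{0} k) ⥤ (P ⥤ ModuleCat.{0} k))
    (adjL : L ⊣ resFunctor k Q) (adjR : resFunctor k Q ⊣ R)
    [IsIso adjL.unit] [IsIso adjR.counit]
    (M : ↥Q ⥤ ModuleCat.{0} k) (hfd : PointwiseFinite k M)
    (hbrick : Nonempty (CategoryTheory.End M ≃+* k))
    (X : P ⥤ ModuleCat.{0} k) (hres : Nonempty ((resFunctor k Q).obj X ≅ M)) :
    ((∃ e : L.obj M ⟶ X, Epi e) ↔
      ∀ (Y : P ⥤ ModuleCat.{0} k) (m : Y ⟶ X), Mono m → ¬ IsIso m →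
        ¬ Nonempty ((resFunctor k Q).obj Y ≅ M)) ∧
    ((∃ m : X ⟶ R.obj M, Mono m) ↔
      ∀ (Z : P ⥤ ModuleCat.{0} k) (e : X ⟶ Z), Epi e → ¬ IsIso e →
        ¬ Nonempty ((resFunctor k Q).obj Z ≅ M)) := by
  
  obtain ⟨ρ⟩ := hbrick
  obtain ⟨σ⟩ := hres
  constructor
  · constructor
    · rintro ⟨e, he⟩ Y m hm hmn ⟨τ⟩
      haveI := hm
      haveI : Mono ((resFunctor k Q).map m) := res_map_mono m
      set β : M ⟶ M := τ.inv ≫ (resFunctor k Q).map m ≫ σ.hom with hβ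
      haveI : Mono β := by rw [hβ]; infer_instance
      obtain ⟨u, hu1, hu2⟩ := brick_inv ρ β (brick_mono_ne_zero ρ β)
      set α : M ⟶ (resFunctor k Q).obj X := adjL.homEquiv M X e with hα
      set γ : M ⟶ (resFunctor k Q).obj Y := α ≫ σ.hom ≫ u ≫ τ.inv with hγdef
      have key : σ.hom ≫ u ≫ τ.inv ≫ (resFunctor k Q).map m = 𝟙 ((resFunctor k Q).obj X) := by
        have hβσ : τ.inv ≫ (resFunctor k Q).map m = β ≫ σ.inv := by
          rw [hβ]; simp
        rw [hβσ, show u ≫ β ≫ σ.inv = (u ≫ β) ≫ σ.inv from (Category.assoc _ _ _).symm, hu2]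
        simp
      have hγ : γ ≫ (resFunctor k Q).map m = α := by
        rw [hγdef]
        simp only [Category.assoc]
        rw [key, Category.comp_id]
      have heq : ((adjL.homEquiv M Y).symm γ) ≫ m = e := by
        apply (adjL.homEquiv M X).injective
        rw [Adjunction.homEquiv_naturality_right, Equiv.apply_symm_apply, hγ, hα]
      haveI : Epi (((adjL.homEquiv M Y).symm γ) ≫ m) := by rw [heq]; exact he
      haveI : Epi m := epi_of_epi ((adjL.homEquiv M Y).symm γ) m
      exact hmn (isIso_of_mono_of_epi m)
    · intro H
      set e : L.obj M ⟶ X := (adjL.homEquiv M X).symm σ.inv with hedef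
      have h1 : adjL.unit.app M ≫ (resFunctor k Q).map e = σ.inv := by
        have h0 : adjL.homEquiv M X e = σ.inv := by
          rw [hedef]; exact Equiv.apply_symm_apply _ _
        rw [adjL.homEquiv_unit] at h0
        exact h0
      haveI : IsIso (adjL.unit.app M ≫ (resFunctor k Q).map e) := by
        rw [h1]; infer_instance
      haveI : IsIso ((resFunctor k Q).map e) :=
        IsIso.of_isIso_comp_left (adjL.unit.app M) ((resFunctor k Q).map e)
      have hfac : Abelian.factorThruImage e ≫ Abelian.image.ι e = e := Abelian.image.fac e
      haveI : Mono ((resFunctor k Q).map (Abelian.image.ι e)) := res_map_mono _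
      haveI : Epi ((resFunctor k Q).map (Abelian.factorThruImage e)) := res_map_epi _
      have hcomp : (resFunctor k Q).map (Abelian.factorThruImage e) ≫
          (resFunctor k Q).map (Abelian.image.ι e) = (resFunctor k Q).map e := by
        rw [← Functor.map_comp, hfac]
      haveI : Epi ((resFunctor k Q).map (Abelian.factorThruImage e) ≫
          (resFunctor k Q).map (Abelian.image.ι e)) := by rw [hcomp]; infer_instance
      haveI : Epi ((resFunctor k Q).map (Abelian.image.ι e)) :=
        epi_of_epi ((resFunctor k Q).map (Abelian.factorThruImage e)) _
      haveI : IsIso ((resFunctor k Q).map (Abelian.image.ι e)) := isIso_of_mono_of_epi _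
      haveI : IsIso (Abelian.image.ι e) := by
        by_contra hni
        exact H (Abelian.image e) (Abelian.image.ι e) inferInstance hni
          ⟨asIso ((resFunctor k Q).map (Abelian.image.ι e)) ≪≫ σ⟩
      exact ⟨e, by rw [← hfac]; infer_instance⟩
  · constructor
    · rintro ⟨m, hm⟩ Z e he hen ⟨τ⟩
      haveI := hm
      haveI := he
      haveI : Epi ((resFunctor k Q).map e) := res_map_epi e
      set β : M ⟶ M := σ.inv ≫ (resFunctor k Q).map e ≫ τ.hom with hβ
      haveI : Epi β := by rw [hβ]; infer_instance
      obtain ⟨u, hu1, hu2⟩ := brick_inv ρ β (brick_epi_ne_zero ρ β)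
      set α : (resFunctor k Q).obj X ⟶ M := (adjR.homEquiv X M).symm m with hα
      set γ : (resFunctor k Q).obj Z ⟶ M := τ.hom ≫ u ≫ σ.inv ≫ α with hγdef
      have key : (resFunctor k Q).map e ≫ τ.hom ≫ u = σ.hom := by
        have hβσ : (resFunctor k Q).map e ≫ τ.hom = σ.hom ≫ β := by
          rw [hβ]; simp
        rw [show (resFunctor k Q).map e ≫ τ.hom ≫ u
            = ((resFunctor k Q).map e ≫ τ.hom) ≫ u from by simp only [Category.assoc], hβσ,
          Category.assoc, hu1]
        simp
      have hγ : (resFunctor k Q).map e ≫ γ = α := by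
        rw [hγdef]
        rw [show (resFunctor k Q).map e ≫ τ.hom ≫ u ≫ σ.inv ≫ α
            = ((resFunctor k Q).map e ≫ τ.hom ≫ u) ≫ σ.inv ≫ α from by
              simp only [Category.assoc], key]
        simp
      have heq : e ≫ adjR.homEquiv Z M γ = m := by
        rw [← Adjunction.homEquiv_naturality_left, hγ, hα, Equiv.apply_symm_apply]
      haveI : Mono (e ≫ adjR.homEquiv Z M γ) := by rw [heq]; exact hm
      haveI : Mono e := mono_of_mono e (adjR.homEquiv Z M γ)
      exact hen (isIso_of_mono_of_epi e)
    · intro H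
      set m : X ⟶ R.obj M := adjR.homEquiv X M σ.hom with hmdef
      have h1 : (resFunctor k Q).map m ≫ adjR.counit.app M = σ.hom := by
        have h0 : (adjR.homEquiv X M).symm m = σ.hom := by
          rw [hmdef]; exact Equiv.symm_apply_apply _ _
        rw [adjR.homEquiv_counit] at h0
        exact h0
      haveI : IsIso ((resFunctor k Q).map m ≫ adjR.counit.app M) := by
        rw [h1]; infer_instance
      haveI : IsIso ((resFunctor k Q).map m) :=
        IsIso.of_isIso_comp_right ((resFunctor k Q).map m) (adjR.counit.app M)
      have hfac : Abelian.factorThruImage m ≫ Abelian.image.ι m = m := Abelian.image.fac m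
      haveI : Mono ((resFunctor k Q).map (Abelian.image.ι m)) := res_map_mono _
      haveI : Epi ((resFunctor k Q).map (Abelian.factorThruImage m)) := res_map_epi _
      have hcomp : (resFunctor k Q).map (Abelian.factorThruImage m) ≫
          (resFunctor k Q).map (Abelian.image.ι m) = (resFunctor k Q).map m := by
        rw [← Functor.map_comp, hfac]
      haveI : Mono ((resFunctor k Q).map (Abelian.factorThruImage m) ≫
          (resFunctor k Q).map (Abelian.image.ι m)) := by rw [hcomp]; infer_instance
      haveI : Mono ((resFunctor k Q).map (Abelian.factorThruImage m)) :=
        mono_of_mono ((resFunctor k Q).map (Abelian.factorThruImage m))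
          ((resFunctor k Q).map (Abelian.image.ι m))
      haveI : IsIso ((resFunctor k Q).map (Abelian.factorThruImage m)) := isIso_of_mono_of_epi _
      haveI : IsIso (Abelian.factorThruImage m) := by
        by_contra hni
        exact H (Abelian.image m) (Abelian.factorThruImage m) inferInstance hni
          ⟨(asIso ((resFunctor k Q).map (Abelian.factorThruImage m))).symm ≪≫ σ⟩
      exact ⟨m, by rw [← hfac]; infer_instance⟩
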